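/- Assume the energy functional E satisfies conditions (E1), (E2) and (E3'). Let ψ : [0,∞) → [0,∞) be convex, lower semicontinuous, with ψ(0) = 0 and ψ(r)/r → ∞ as r → ∞, with conjugate ψ*(s) := sup_{r≥0}(s·r − ψ(r)), and let Y_τ^ψ(E)(t,u) := inf_{v∈X} [ τ·ψ(d(u,v)/τ) + E(t,v) ]. Let τ_k ↓ 0, t_k → t in [0,T] and u_k → u in X with sup_k E(t_k,u_k) ≤ C for some C. Then liminf_{k→∞} (E(t_k,u_k) − Y_{τ_k}^ψ(E)(t_k,u_k))/τ_k ≥ ψ*(|DE|(t,u)). -/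

import Mathlib

open Filter MeasureTheory Topology Set
open scoped ENNReal

noncomputable section

variable {X : Type*} [MetricSpace X]

/-- Pointwise total variation of `u : ℝ → X` on a set `S ⊆ ℝ` (with value in `ℝ≥0∞`),
defined as the supremum over finite increasing families of points of `S` of the sums of the
consecutive distances. -/
def varD (u : ℝ → X) (S : Set ℝ) : ℝ≥0∞ :=
  ⨆ (M : ℕ) (t : ℕ → ℝ)
    (_ : (∀ j, j ≤ M → t j ∈ S) ∧ ∀ j, j < M → t j < t (j + 1)),
    ∑ j ∈ Finset.range M, edist (u (t j)) (u (t (j + 1)))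

/-- Left limit of `u` at `t`, with the convention that it equals `u 0` for `t ≤ 0`
(curves are thought of as being defined on `[0,T]`). -/
def lLim (u : ℝ → X) (t : ℝ) : X :=
  if t ≤ 0 then u 0 else Function.leftLim u t

/-- Right limit of `u : [0,T] → X` at `t`, with the convention that it equals `u T` for
`t ≥ T`. -/
def rLim (u : ℝ → X) (T t : ℝ) : X :=
  if T ≤ t then u T else Function.rightLim u t

/-- The jump set of a curve `u : [0,T] → X`. -/
def jumpSet (u : ℝ → X) (T : ℝ) : Set ℝ :=
  {t | t ∈ Icc 0 T ∧ (lLim u t ≠ u t ∨ rLim u T t ≠ u t)}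

/-- The metric slope `|DE|(t,u)` of the energy functional `E`. -/
def slopeE (E : ℝ → X → ℝ) (t : ℝ) (u : X) : ℝ≥0∞ :=
  Filter.limsup (fun v => ENNReal.ofReal ((E t u - E t v) / dist u v)) (𝓝[≠] u)

/-- The metric derivative of a curve `θ : ℝ → X` (via `limUnder`: it coincides with the
metric derivative at every point where the latter exists). -/
def mder (θ : ℝ → X) (r : ℝ) : ℝ :=
  limUnder (𝓝[≠] r) fun s => dist (θ s) (θ r) / |s - r|

/-- `θ` is absolutely continuous on `[a,b]`. -/
def IsAC (θ : ℝ → X) (a b : ℝ) : Prop :=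
  ∃ m : ℝ → ℝ, IntegrableOn m (Icc a b) ∧
    ∀ s t : ℝ, a ≤ s → s ≤ t → t ≤ b → dist (θ s) (θ t) ≤ ∫ r in s..t, m r

/-- The viscous jump dissipation cost `v(t,u₋,u₊)`. -/
def vCost (E : ℝ → X → ℝ) (t : ℝ) (um up : X) : ℝ≥0∞ :=
  ⨅ (r₀ : ℝ) (r₁ : ℝ) (θ : ℝ → X)
    (_ : r₀ ≤ r₁ ∧ IsAC θ r₀ r₁ ∧ θ r₀ = um ∧ θ r₁ = up),
    ∫⁻ r in Ioc r₀ r₁, ENNReal.ofReal (mder θ r) * max (slopeE E t (θ r)) 1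

/-- The viscously corrected distance `D_μ(x,y) = d(x,y) + (μ/2) d(x,y)²`. -/
def Dmu (μ : ℝ) (x y : X) : ℝ := dist x y + μ / 2 * dist x y ^ 2

/-- The residual stability function `R_μ(t,x) = sup_y (E(t,x) − E(t,y) − D_μ(x,y))`. -/
def Rmu (E : ℝ → X → ℝ) (μ t : ℝ) (x : X) : ℝ≥0∞ :=
  ⨆ y : X, ENNReal.ofReal (E t x - E t y - Dmu μ x y)

/-- The holes of a compact set `K ⊆ ℝ` (connected components of `[inf K, sup K] ∖ K`),
identified with the pairs of their endpoints. -/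
def holes (K : Set ℝ) : Set (ℝ × ℝ) :=
  {p | p.1 ∈ K ∧ p.2 ∈ K ∧ p.1 < p.2 ∧ Ioo p.1 p.2 ∩ K = ∅}

/-- The visco-energetic transition cost `Trc_μ(t,θ,K)`. -/
def trCost (E : ℝ → X → ℝ) (μ t : ℝ) (θ : ℝ → X) (K : Set ℝ) : ℝ≥0∞ :=
  varD θ K
    + (∑' p : ↥(holes K),
        ENNReal.ofReal (μ / 2 * dist (θ (p : ℝ × ℝ).1) (θ (p : ℝ × ℝ).2) ^ 2))
    + ∑' s : ↥(K \ {sSup K}), Rmu E μ t (θ (s : ℝ))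

/-- The visco-energetic jump dissipation cost `c_μ(t,u₋,u₊)`. -/
def veCost (E : ℝ → X → ℝ) (μ : ℝ) (t : ℝ) (um up : X) : ℝ≥0∞ :=
  ⨅ (K : Set ℝ) (θ : ℝ → X)
    (_ : K.Nonempty ∧ IsCompact K ∧ ContinuousOn θ K ∧ θ (sInf K) = um ∧ θ (sSup K) = up),
    trCost E μ t θ K

/-- The jump contribution `Jmp_{Δ_e}(u;[t₀,t₁])` of the incremental cost associated with a
jump dissipation cost `e`. -/
def jmpVar (e : ℝ → X → X → ℝ≥0∞) (u : ℝ → X) (T t₀ t₁ : ℝ) : ℝ≥0∞ :=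
  (e t₀ (u t₀) (rLim u T t₀) - edist (u t₀) (rLim u T t₀))
    + (e t₁ (lLim u t₁) (u t₁) - edist (lLim u t₁) (u t₁))
    + ∑' t : ↥(jumpSet u T ∩ Ioo t₀ t₁),
        ((e (t : ℝ) (lLim u (t : ℝ)) (u (t : ℝ)) - edist (lLim u (t : ℝ)) (u (t : ℝ)))
          + (e (t : ℝ) (u (t : ℝ)) (rLim u T (t : ℝ))
              - edist (u (t : ℝ)) (rLim u T (t : ℝ))))

/-- The augmented total variation `Var_{d,e}(u;[t₀,t₁])`. -/
def varAug (e : ℝ → X → X → ℝ≥0∞) (u : ℝ → X) (T t₀ t₁ : ℝ) : ℝ≥0∞ :=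
  varD u (Icc t₀ t₁) + jmpVar e u T t₀ t₁

/-- Condition (E1): lower semicontinuity and compactness of the sublevel sets of the
perturbed functional `F(t,u) = E(t,u) + d(x₀,u)` on `[0,T] × X`. -/
def CondE1 (E : ℝ → X → ℝ) (T : ℝ) (x₀ : X) : Prop :=
  ∀ C : ℝ,
    LowerSemicontinuousOn (fun p : ℝ × X => E p.1 p.2)
      {p : ℝ × X | p.1 ∈ Icc 0 T ∧ E p.1 p.2 + dist x₀ p.2 ≤ C} ∧
    IsCompact {p : ℝ × X | p.1 ∈ Icc 0 T ∧ E p.1 p.2 + dist x₀ p.2 ≤ C}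

/-- Condition (E2): power control for the power functional `P`, with constant `CP`. -/
def CondE2 (E P : ℝ → X → ℝ) (T : ℝ) (x₀ : X) (CP : ℝ) : Prop :=
  0 < CP ∧
    ∀ t ∈ Icc (0 : ℝ) T, ∀ u : X,
      (P t u : EReal) ≤
          Filter.liminf (fun s => (((E t u - E s u) / (t - s) : ℝ) : EReal)) (𝓝[Ico 0 t] t) ∧
        Filter.limsup (fun s => (((E s u - E t u) / (s - t) : ℝ) : EReal)) (𝓝[Ioc t T] t) ≤
          (P t u : EReal) ∧
        |P t u| ≤ CP * (E t u + dist x₀ u)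

/-- Condition (E3): conditional upper semicontinuity of the power. -/
def CondE3 (E P : ℝ → X → ℝ) (T : ℝ) : Prop :=
  ∀ (tn : ℕ → ℝ) (un : ℕ → X) (t : ℝ) (u : X),
    (∀ n, tn n ∈ Icc (0 : ℝ) T) → t ∈ Icc (0 : ℝ) T →
    Tendsto tn atTop (𝓝 t) → Tendsto un atTop (𝓝 u) →
    Tendsto (fun n => E (tn n) (un n)) atTop (𝓝 (E t u)) →
    Filter.limsup (fun n => ((P (tn n) (un n) : ℝ) : EReal)) atTop ≤ (P t u : EReal)

/-- Condition (E3'): upper semicontinuity of the power and lower semicontinuity of the slope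
along sequences with bounded energy and slope. -/
def CondE3' (E P : ℝ → X → ℝ) (T : ℝ) (x₀ : X) : Prop :=
  ∀ (tn : ℕ → ℝ) (un : ℕ → X) (t : ℝ) (u : X),
    (∀ n, tn n ∈ Icc (0 : ℝ) T) → t ∈ Icc (0 : ℝ) T →
    Tendsto tn atTop (𝓝 t) → Tendsto un atTop (𝓝 u) →
    (∃ C : ℝ, ∀ n, E 0 (un n) + dist x₀ (un n) ≤ C) →
    (∃ S : ℝ≥0∞, S ≠ ⊤ ∧ ∀ n, slopeE E (tn n) (un n) ≤ S) →
    slopeE E t u ≤ Filter.liminf (fun n => slopeE E (tn n) (un n)) atTop ∧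
      Filter.limsup (fun n => ((P (tn n) (un n) : ℝ) : EReal)) atTop ≤ (P t u : EReal)

/-- Condition (E4): the chain-rule inequality. -/
def CondE4 (E P : ℝ → X → ℝ) (T : ℝ) : Prop :=
  ∀ u : ℝ → X, IsAC u 0 T →
    IsAC (fun t => E t (u t)) 0 T ∧
      ∀ᵐ t ∂(volume.restrict (Ioo (0 : ℝ) T)),
        DifferentiableAt ℝ (fun s => E s (u s)) t ∧
          ENNReal.ofReal (P t (u t) - deriv (fun s => E s (u s)) t) ≤
            ENNReal.ofReal (mder u t) * slopeE E t (u t)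

/-- Energetic solution of the rate-independent system `(X,E,d)`. -/
def IsEnergeticSol (E P : ℝ → X → ℝ) (T : ℝ) (u : ℝ → X) : Prop :=
  varD u (Icc 0 T) ≠ ⊤ ∧
    ∀ t ∈ Icc (0 : ℝ) T,
      (∀ v : X, E t (u t) ≤ E t v + dist (u t) v) ∧
        E t (u t) + (varD u (Icc 0 t)).toReal =
          E 0 (u 0) + ∫ s in (0 : ℝ)..t, P s (u s)

/-- Balanced Viscosity solution of the rate-independent system `(X,E,d)`. -/
def IsBVSol (E P : ℝ → X → ℝ) (T : ℝ) (u : ℝ → X) : Prop :=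
  varD u (Icc 0 T) ≠ ⊤ ∧
    (∀ t ∈ Icc (0 : ℝ) T \ jumpSet u T, slopeE E t (u t) ≤ 1) ∧
    ∀ t ∈ Icc (0 : ℝ) T,
      varAug (vCost E) u T 0 t ≠ ⊤ ∧
        E t (u t) + (varAug (vCost E) u T 0 t).toReal =
          E 0 (u 0) + ∫ s in (0 : ℝ)..t, P s (u s)

/-- μ-Visco-Energetic solution of the rate-independent system `(X,E,d)`. -/
def IsVESol (E P : ℝ → X → ℝ) (T μ : ℝ) (u : ℝ → X) : Prop :=
  varD u (Icc 0 T) ≠ ⊤ ∧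
    (∀ t ∈ Icc (0 : ℝ) T \ jumpSet u T, ∀ v : X, E t (u t) ≤ E t v + Dmu μ (u t) v) ∧
    ∀ t ∈ Icc (0 : ℝ) T,
      varAug (veCost E μ) u T 0 t ≠ ⊤ ∧
        E t (u t) + (varAug (veCost E μ) u T 0 t).toReal =
          E 0 (u 0) + ∫ s in (0 : ℝ)..t, P s (u s)


/-- The conjugate `ψ*(s) = sup_{r ≥ 0} (s·r − ψ(r))` of a nonnegative dissipation potential,
extended to `ℝ≥0∞`. -/
def psiStar (ψ : ℝ → ℝ) (s : ℝ≥0∞) : ℝ≥0∞ :=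
  ⨆ (r : ℝ) (_ : 0 ≤ r), (s * ENNReal.ofReal r - ENNReal.ofReal (ψ r))

/-- The generalized Moreau–Yosida approximation `Y_τ^ψ(E)(t,u)`. -/
def MYosida {X : Type*} [MetricSpace X] (E : ℝ → X → ℝ) (ψ : ℝ → ℝ) (τ t : ℝ) (u : X) : ℝ :=
  sInf {v : ℝ | ∃ w : X, v = τ * ψ (dist u w / τ) + E t w}


private lemma lsc_exists_min {Y : Type*} [MetricSpace Y] {K : Set Y} (hK : IsCompact K)
    (hne : K.Nonempty) {f : Y → ℝ} (hf : LowerSemicontinuousOn f K) :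
    ∃ x ∈ K, ∀ y ∈ K, f x ≤ f y := by
  by_cases hbdd : BddBelow (f '' K)
  · set m := sInf (f '' K) with hm
    have hsel : ∀ n : ℕ, ∃ x, x ∈ K ∧ f x < m + 1 / (n + 1) := by
      intro n
      have hlt : sInf (f '' K) < m + 1 / (n + 1) := by
        have : (0:ℝ) < 1 / ((n:ℝ) + 1) := by positivity
        linarith
      obtain ⟨a, ⟨x, hx, rfl⟩, ha⟩ := exists_lt_of_csInf_lt (hne.image f) hlt
      exact ⟨x, hx, ha⟩
    choose x hxK hxf using hsel
    obtain ⟨z, hzK, φ, hφ, hconv⟩ := hK.tendsto_subseq hxK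
    refine ⟨z, hzK, fun y hy => ?_⟩
    have hzm : f z ≤ m := by
      by_contra hlt
      push_neg at hlt
      set y' := (m + f z) / 2 with hy'
      have h1 : y' < f z := by rw [hy']; linarith
      have h2 : m < y' := by rw [hy']; linarith
      have htend : Tendsto (fun n => x (φ n)) atTop (𝓝[K] z) := by
        rw [tendsto_nhdsWithin_iff]
        exact ⟨hconv, Eventually.of_forall fun n => hxK _⟩
      have hev := htend.eventually (hf z hzK y' h1)
      have hev2 : ∀ᶠ n : ℕ in atTop, (1 : ℝ) / ((φ n : ℝ) + 1) < y' - m := by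
        have h3 : Tendsto (fun n : ℕ => (1:ℝ) / ((φ n : ℝ) + 1)) atTop (𝓝 0) :=
          tendsto_one_div_add_atTop_nhds_zero_nat.comp hφ.tendsto_atTop
        exact h3.eventually_lt_const (by linarith)
      obtain ⟨n, hn1, hn2⟩ := (hev.and hev2).exists
      have := hxf (φ n)
      linarith
    exact hzm.trans (csInf_le hbdd ⟨y, hy, rfl⟩)
  · exfalso
    have hsel : ∀ n : ℕ, ∃ x, x ∈ K ∧ f x < -n := by
      intro n
      obtain ⟨a, ⟨x, hx, rfl⟩, ha⟩ := not_bddBelow_iff.1 hbdd (-n)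
      exact ⟨x, hx, ha⟩
    choose x hxK hxf using hsel
    obtain ⟨z, hzK, φ, hφ, hconv⟩ := hK.tendsto_subseq hxK
    have htend : Tendsto (fun n => x (φ n)) atTop (𝓝[K] z) := by
      rw [tendsto_nhdsWithin_iff]
      exact ⟨hconv, Eventually.of_forall fun n => hxK _⟩
    have hev := htend.eventually (hf z hzK (f z - 1) (by linarith))
    have hev2 : ∀ᶠ n : ℕ in atTop, (-(φ n : ℝ)) ≤ f z - 2 := by
      have h3 : Tendsto (fun n : ℕ => (-(φ n : ℝ))) atTop atBot :=
        tendsto_neg_atBot_iff.2 (tendsto_natCast_atTop_atTop.comp hφ.tendsto_atTop)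
      exact h3.eventually_le_atBot _
    obtain ⟨n, hn1, hn2⟩ := (hev.and hev2).exists
    have := hxf (φ n)
    linarith

section AuxTime
variable {X : Type*} [MetricSpace X] {E P : ℝ → X → ℝ} {T : ℝ} {x₀ : X} {CP : ℝ}

private lemma usc_in_time (hE2 : CondE2 E P T x₀ CP) {w : X} {σ : ℝ} (hσ : σ ∈ Icc 0 T) :
    UpperSemicontinuousWithinAt (fun s => E s w) (Icc 0 T) σ := by
  intro y hy
  have hsplit : Icc (0:ℝ) T ⊆ Ico 0 σ ∪ ({σ} ∪ Ioc σ T) := by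
    intro s hs
    rcases lt_trichotomy s σ with h | h | h
    · exact Or.inl ⟨hs.1, h⟩
    · exact Or.inr (Or.inl (by simp [h]))
    · exact Or.inr (Or.inr ⟨h, hs.2⟩)
  have hmono : 𝓝[Icc 0 T] σ ≤ 𝓝[Ico 0 σ ∪ ({σ} ∪ Ioc σ T)] σ := nhdsWithin_mono σ hsplit
  refine Filter.Eventually.filter_mono hmono ?_
  rw [nhdsWithin_union, nhdsWithin_union, eventually_sup, eventually_sup]
  obtain ⟨h1, h2, _⟩ := hE2.2 σ hσ w
  refine ⟨?_, ?_, ?_⟩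
  · set b := P σ w - 1 with hb
    have hblt : ((b : ℝ) : EReal) < ((P σ w : ℝ) : EReal) := by
      exact_mod_cast sub_one_lt _
    have hev := eventually_lt_of_lt_liminf (lt_of_lt_of_le hblt h1)
    set δ := (y - E σ w) / (|b| + 1) with hδ
    have hδpos : 0 < δ := by
      apply div_pos (by linarith) (by positivity)
    have hev2 : ∀ᶠ s in 𝓝[Ico 0 σ] σ, |s - σ| < δ := by
      apply Filter.Eventually.filter_mono nhdsWithin_le_nhds
      have := Metric.ball_mem_nhds σ hδpos
      filter_upwards [this] with s hs
      simpa [Real.dist_eq] using hs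
    filter_upwards [hev, hev2, self_mem_nhdsWithin] with s hs hs2 hs3
    rw [EReal.coe_lt_coe_iff] at hs
    have hslt : s < σ := hs3.2
    have hpos : 0 < σ - s := by linarith
    rw [lt_div_iff₀ hpos] at hs
    have habs : |s - σ| = σ - s := by rw [abs_sub_comm]; exact abs_of_pos hpos
    have h4 : -b * (σ - s) ≤ |b| * (σ - s) := by
      apply mul_le_mul_of_nonneg_right (neg_le_abs b) hpos.le
    have h5 : |b| * (σ - s) < (|b| + 1) * δ := by
      have : |b| * (σ - s) ≤ |b| * δ := by
        apply mul_le_mul_of_nonneg_left _ (abs_nonneg b)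
        rw [← habs]; exact hs2.le
      nlinarith [abs_nonneg b]
    have h6 : (|b| + 1) * δ = y - E σ w := by
      rw [hδ]; field_simp
    nlinarith
  · rw [nhdsWithin_singleton, eventually_pure]
    exact hy
  · set b := P σ w + 1 with hb
    have hblt : ((P σ w : ℝ) : EReal) < ((b : ℝ) : EReal) := by
      exact_mod_cast lt_add_one _
    have hev := eventually_lt_of_limsup_lt (lt_of_le_of_lt h2 hblt)
    set δ := (y - E σ w) / (|b| + 1) with hδ
    have hδpos : 0 < δ := by
      apply div_pos (by linarith) (by positivity)
    have hev2 : ∀ᶠ s in 𝓝[Ioc σ T] σ, |s - σ| < δ := by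
      apply Filter.Eventually.filter_mono nhdsWithin_le_nhds
      filter_upwards [Metric.ball_mem_nhds σ hδpos] with s hs
      simpa [Real.dist_eq] using hs
    filter_upwards [hev, hev2, self_mem_nhdsWithin] with s hs hs2 hs3
    rw [EReal.coe_lt_coe_iff] at hs
    have hpos : 0 < s - σ := by have := hs3.1; linarith
    rw [div_lt_iff₀ hpos] at hs
    have habs : |s - σ| = s - σ := abs_of_pos hpos
    have h4 : b * (s - σ) ≤ |b| * (s - σ) := by
      apply mul_le_mul_of_nonneg_right (le_abs_self b) hpos.le
    have h5 : |b| * (s - σ) < (|b| + 1) * δ := by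
      have : |b| * (s - σ) ≤ |b| * δ := by
        apply mul_le_mul_of_nonneg_left _ (abs_nonneg b)
        rw [← habs]; exact hs2.le
      nlinarith [abs_nonneg b]
    have h6 : (|b| + 1) * δ = y - E σ w := by
      rw [hδ]; field_simp
    nlinarith

private lemma lsc_in_time (hE1 : CondE1 E T x₀) (hE2 : CondE2 E P T x₀ CP)
    {w : X} {σ : ℝ} (hσ : σ ∈ Icc 0 T) :
    LowerSemicontinuousWithinAt (fun s => E s w) (Icc 0 T) σ := by
  intro y hy
  have husc := usc_in_time (w := w) hE2 hσ (E σ w + 1) (by linarith)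
  set Cst := E σ w + 1 + dist x₀ w with hCst
  set A := Icc 0 T ∩ {s | E s w + dist x₀ w ≤ Cst} with hA
  have hmemA : {s | E s w + dist x₀ w ≤ Cst} ∈ 𝓝[Icc 0 T] σ := by
    filter_upwards [husc] with s hs
    simp only [Set.mem_setOf_eq, hCst]
    linarith
  have hrestrict : 𝓝[Icc 0 T] σ = 𝓝[A] σ := nhdsWithin_restrict'' _ hmemA
  have hlsc := (hE1 Cst).1 (σ, w) ⟨hσ, by simp only [hCst]; linarith⟩
  have htend : Tendsto (fun s => ((s, w) : ℝ × X)) (𝓝[A] σ)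
      (𝓝[{p : ℝ × X | p.1 ∈ Icc 0 T ∧ E p.1 p.2 + dist x₀ p.2 ≤ Cst}] (σ, w)) := by
    apply ContinuousWithinAt.tendsto_nhdsWithin
    · exact (continuous_id.prodMk continuous_const).continuousWithinAt
    · intro s hs
      exact ⟨hs.1, hs.2⟩
  have hev := htend.eventually (hlsc y hy)
  rw [hrestrict]
  exact hev

private lemma cont_in_time (hE1 : CondE1 E T x₀) (hE2 : CondE2 E P T x₀ CP) (w : X) :
    ContinuousOn (fun s => E s w) (Icc 0 T) := by
  intro σ hσ
  have h1 := lsc_in_time hE1 hE2 hσ (w := w)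
  have h2 := usc_in_time hE2 hσ (w := w)
  exact tendsto_order.2 ⟨fun y hy => h1 y hy, fun y hy => h2 y hy⟩

private lemma energy_time_bound (hE1 : CondE1 E T x₀) (hE2 : CondE2 E P T x₀ CP)
    {w : X} {t' : ℝ} (ht' : t' ∈ Icc 0 T) :
    E 0 w + dist x₀ w ≤ (E t' w + dist x₀ w) * Real.exp (CP * t') := by
  set c := dist x₀ w with hc
  set f : ℝ → ℝ := fun s => E (t' - s) w + c with hf
  have hmaps : MapsTo (fun s => t' - s) (Icc 0 t') (Icc 0 T) := by
    intro s hs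
    simp only [Set.mem_Icc] at hs ⊢
    obtain ⟨hs1, hs2⟩ := hs
    exact ⟨by linarith, by linarith [ht'.1, ht'.2]⟩
  have hcont : ContinuousOn f (Icc 0 t') := by
    apply ContinuousOn.add _ continuousOn_const
    exact (cont_in_time hE1 hE2 w).comp
      (continuousOn_const.sub continuousOn_id) hmaps
  have hf' : ∀ x ∈ Ico 0 t', ∀ r, CP * f x < r →
      ∃ᶠ z in 𝓝[>] x, (z - x)⁻¹ * (f z - f x) < r := by
    intro x hx r hr
    set σ := t' - x with hσdef
    have hσpos : 0 < σ := by simp only [hσdef]; linarith [hx.2]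
    have hσIcc : σ ∈ Icc (0:ℝ) T := ⟨hσpos.le, by simp only [hσdef]; linarith [hx.1, ht'.2]⟩
    obtain ⟨h1, _, h3⟩ := hE2.2 σ hσIcc w
    have hrP : (-r : ℝ) < P σ w := by
      have h4 : -P σ w ≤ |P σ w| := neg_le_abs _
      have h5 : f x = E σ w + c := rfl
      rw [h5] at hr
      linarith [abs_le.1 (le_refl |P σ w|)]
    have hev := eventually_lt_of_lt_liminf
      (lt_of_lt_of_le (by exact_mod_cast hrP : ((-r:ℝ):EReal) < ((P σ w : ℝ):EReal)) h1)
    have htend : Tendsto (fun z => t' - z) (𝓝[Ioo x t'] x) (𝓝[Ico 0 σ] σ) := by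
      apply ContinuousWithinAt.tendsto_nhdsWithin
      · have : ContinuousWithinAt (fun z : ℝ => t' - z) (Ioo x t') x :=
          (continuous_const.sub continuous_id).continuousWithinAt
        simpa [hσdef] using this
      · intro z hz
        simp only [Set.mem_Ioo] at hz
        simp only [Set.mem_Ico, hσdef]
        exact ⟨by linarith [hz.2], by linarith [hz.1]⟩
    have hev2 := htend.eventually hev
    have hfreq : ∃ᶠ z in 𝓝[Ioo x t'] x, (z - x)⁻¹ * (f z - f x) < r := by
      haveI := left_nhdsWithin_Ioo_neBot hx.2
      apply Filter.Eventually.frequently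
      filter_upwards [hev2, self_mem_nhdsWithin] with z hz hz2
      rw [EReal.coe_lt_coe_iff] at hz
      simp only [Set.mem_Ioo] at hz2
      have hzx : 0 < z - x := by linarith [hz2.1]
      have heq : σ - (t' - z) = z - x := by simp only [hσdef]; ring
      rw [heq] at hz
      rw [lt_div_iff₀ hzx] at hz
      have : f z - f x = -(E σ w - E (t' - z) w) := by
        simp only [hf, hσdef]; ring
      rw [this]
      rw [inv_mul_lt_iff₀ hzx]
      nlinarith
    exact hfreq.filter_mono (nhdsWithin_mono x Set.Ioo_subset_Ioi_self)
  have hgron := le_gronwallBound_of_liminf_deriv_right_le (f' := fun s => CP * f s)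
    (K := CP) (ε := 0) (δ := f 0) hcont hf' (le_refl (f 0)) (fun x _ => by simp)
  have ht'mem : t' ∈ Icc (0:ℝ) t' := ⟨ht'.1, le_refl t'⟩
  have := hgron t' ht'mem
  rw [gronwallBound_ε0, sub_zero] at this
  have h0 : f t' = E 0 w + c := by simp [hf]
  have h1 : f 0 = E t' w + c := by simp [hf]
  rw [h0, h1] at this
  exact this

end AuxTime

theorem statement15
    {X : Type*} [MetricSpace X] [CompleteSpace X]
    (T : ℝ) (hT : 0 < T) (E P : ℝ → X → ℝ) (x₀ : X) (CP : ℝ)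
    (hE1 : CondE1 E T x₀) (hE2 : CondE2 E P T x₀ CP)
    (hE3' : CondE3' E P T x₀)
    (ψ : ℝ → ℝ) (hψconv : ConvexOn ℝ (Ici 0) ψ)
    (hψlsc : LowerSemicontinuousOn ψ (Ici 0))
    (hψ0 : ψ 0 = 0) (hψnn : ∀ r : ℝ, 0 ≤ r → 0 ≤ ψ r)
    (hψsuper : Tendsto (fun r => ψ r / r) atTop atTop)
    (τ : ℕ → ℝ) (hτpos : ∀ k, 0 < τ k) (hτanti : Antitone τ)
    (hτ : Tendsto τ atTop (𝓝 (0 : ℝ)))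
    (tk : ℕ → ℝ) (t : ℝ) (htk : ∀ k, tk k ∈ Icc (0 : ℝ) T) (ht : t ∈ Icc (0 : ℝ) T)
    (htkt : Tendsto tk atTop (𝓝 t))
    (uk : ℕ → X) (u : X) (huk : Tendsto uk atTop (𝓝 u))
    (C : ℝ) (hC : ∀ k, E (tk k) (uk k) ≤ C) :
    psiStar ψ (slopeE E t u) ≤
      Filter.liminf
        (fun k => ENNReal.ofReal ((E (tk k) (uk k) - MYosida E ψ (τ k) (tk k) (uk k)) / τ k))
        atTop := by
  -- F(t,u) = E t u + dist x₀ u is nonnegative on [0,T] × X (from (E2))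
  have hFnonneg : ∀ s ∈ Icc (0:ℝ) T, ∀ w : X, 0 ≤ E s w + dist x₀ w := by
    intro s hs w
    have h3 := (hE2.2 s hs w).2.2
    nlinarith [abs_nonneg (P s w), hE2.1]
  -- superlinearity: ψ b ≥ b for b large
  obtain ⟨M, hM⟩ := (hψsuper.eventually_ge_atTop 1).exists_forall_of_atTop
  set M' := max M 1 with hM'def
  have hψlin : ∀ b : ℝ, M' ≤ b → b ≤ ψ b := by
    intro b hb
    have hb1 : (1:ℝ) ≤ b := le_trans (le_max_right _ _) hb
    have h := hM b (le_trans (le_max_left _ _) hb)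
    rw [le_div_iff₀ (by linarith)] at h
    linarith
  have hM'pos : (0:ℝ) < M' := lt_of_lt_of_le one_pos (le_max_right _ _)
  -- the Moreau-Yosida infimum is attained below every competitor
  have hMY : ∀ (k : ℕ) (w' : X),
      MYosida E ψ (τ k) (tk k) (uk k) ≤ τ k * ψ (dist (uk k) w' / τ k) + E (tk k) w' := by
    intro k w'
    have hmem : (τ k * ψ (dist (uk k) w' / τ k) + E (tk k) w') ∈
        {v : ℝ | ∃ w : X, v = τ k * ψ (dist (uk k) w / τ k) + E (tk k) w} := ⟨w', rfl⟩
    refine csInf_le ⟨-(dist x₀ (uk k)) - M' * τ k, ?_⟩ hmem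
    rintro v ⟨w, rfl⟩
    have hτk := hτpos k
    have hEw : -(dist x₀ w) ≤ E (tk k) w := by linarith [hFnonneg (tk k) (htk k) w]
    have hdd : dist x₀ w ≤ dist x₀ (uk k) + dist (uk k) w := dist_triangle _ _ _
    have hψv : 0 ≤ ψ (dist (uk k) w / τ k) := hψnn _ (by positivity)
    by_cases hcase : dist (uk k) w / τ k ≤ M'
    · have h1 : dist (uk k) w ≤ M' * τ k := by
        rw [div_le_iff₀ hτk] at hcase; linarith
      have h5 : 0 ≤ τ k * ψ (dist (uk k) w / τ k) := mul_nonneg hτk.le hψv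
      linarith
    · have h6 : dist (uk k) w / τ k ≤ ψ (dist (uk k) w / τ k) :=
        hψlin _ (le_of_lt (lt_of_not_ge hcase))
      have h7 : dist (uk k) w ≤ τ k * ψ (dist (uk k) w / τ k) := by
        have := mul_le_mul_of_nonneg_left h6 hτk.le
        rwa [mul_div_cancel₀ _ (ne_of_gt hτk)] at this
      nlinarith [mul_pos hM'pos hτk]
  -- bound on dist (uk k) u
  obtain ⟨N, hN⟩ := Metric.tendsto_atTop.1 huk 1 one_pos
  set D₀ := 1 + ∑ i ∈ Finset.range (N + 1), dist (uk i) u with hD₀def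
  have hsum_nonneg : (0:ℝ) ≤ ∑ i ∈ Finset.range (N + 1), dist (uk i) u :=
    Finset.sum_nonneg fun i _ => dist_nonneg
  have hD₀ : ∀ k, dist (uk k) u ≤ D₀ := by
    intro k
    by_cases hk : k ≤ N
    · have h1 : dist (uk k) u ≤ ∑ i ∈ Finset.range (N + 1), dist (uk i) u :=
        Finset.single_le_sum (fun i _ => dist_nonneg) (Finset.mem_range.2 (by omega))
      linarith
    · have := hN k (by omega)
      linarith
  -- main bound for each r ≥ 0
  refine iSup_le fun r => iSup_le fun hr => ?_
  rcases eq_or_lt_of_le hr with hr0 | hrpos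
  · rw [← hr0]
    simp [hψ0]
  -- key claim
  have key : ∀ a : NNReal, (a : ℝ≥0∞) < slopeE E t u →
      ∀ᶠ k in atTop, (a:ℝ) * r - ψ r ≤
        (E (tk k) (uk k) - MYosida E ψ (τ k) (tk k) (uk k)) / τ k := by
    intro a ha
    have hmin : ∀ k : ℕ, ∃ wb : X, dist (uk k) wb ≤ r * τ k ∧
        ∀ v ∈ Metric.closedBall (uk k) (r * τ k),
          E (tk k) wb + (a:ℝ) * dist (uk k) wb ≤ E (tk k) v + (a:ℝ) * dist (uk k) v := by
      intro k
      have hτk := hτpos k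
      set R := r * τ k with hRdef
      have hRpos : 0 < R := mul_pos hrpos hτk
      set C₁ := C + dist x₀ (uk k) + R with hC₁def
      set Sset := {p : ℝ × X | p.1 ∈ Icc 0 T ∧ E p.1 p.2 + dist x₀ p.2 ≤ C₁} with hSsetdef
      have hScpt : IsCompact Sset := (hE1 C₁).2
      have hslice : IsCompact {v : X | (tk k, v) ∈ Sset} := by
        have hcl : IsClosed {p : ℝ × X | p.1 = tk k} :=
          isClosed_eq continuous_fst continuous_const
        have h1 : IsCompact (Sset ∩ {p : ℝ × X | p.1 = tk k}) := hScpt.inter_right hcl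
        have h2 : {v : X | (tk k, v) ∈ Sset} =
            Prod.snd '' (Sset ∩ {p : ℝ × X | p.1 = tk k}) := by
          ext v
          constructor
          · intro hv
            exact ⟨(tk k, v), ⟨hv, rfl⟩, rfl⟩
          · rintro ⟨⟨p1, p2⟩, ⟨hp, hp1⟩, rfl⟩
            simp only [Set.mem_setOf_eq] at hp1
            subst hp1
            exact hp
        rw [h2]
        exact h1.image continuous_snd
      set K := {v : X | (tk k, v) ∈ Sset} ∩ Metric.closedBall (uk k) R with hKdef
      have hKcpt : IsCompact K := hslice.inter_right Metric.isClosed_closedBall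
      have hx₀uk : (0:ℝ) ≤ dist x₀ (uk k) := dist_nonneg
      have hukK : uk k ∈ K := by
        refine ⟨⟨htk k, ?_⟩, Metric.mem_closedBall_self hRpos.le⟩
        have := hC k
        simp only [hC₁def]
        linarith
      have hG_lsc : LowerSemicontinuousOn
          (fun v => E (tk k) v + (a:ℝ) * dist (uk k) v) K := by
        intro v hv y hy
        have hy' : y < E (tk k) v + (a:ℝ) * dist (uk k) v := hy
        set η := (E (tk k) v + (a:ℝ) * dist (uk k) v - y) / 2 with hη
        have hηpos : 0 < η := by
          simp only [hη]
          linarith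
        have hlscE := (hE1 C₁).1 (tk k, v) hv.1 (E (tk k) v - η) (by linarith)
        have htd : Tendsto (fun v' => ((tk k, v') : ℝ × X)) (𝓝[K] v) (𝓝[Sset] (tk k, v)) := by
          apply ContinuousWithinAt.tendsto_nhdsWithin
          · exact (continuous_const.prodMk continuous_id).continuousWithinAt
          · exact fun v' hv' => hv'.1
        have hev1 := htd.eventually hlscE
        have hev2 : ∀ᶠ v' in 𝓝[K] v,
            (a:ℝ) * dist (uk k) v - η < (a:ℝ) * dist (uk k) v' := by
          apply Filter.Eventually.filter_mono nhdsWithin_le_nhds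
          have hcont2 : Continuous fun v' : X => (a:ℝ) * dist (uk k) v' :=
            continuous_const.mul (continuous_const.dist continuous_id)
          exact hcont2.continuousAt.eventually_const_lt
            (show (a:ℝ) * dist (uk k) v - η < (a:ℝ) * dist (uk k) v by linarith)
        filter_upwards [hev1, hev2] with v' h1 h2
        have hyeq : y = (E (tk k) v - η) + ((a:ℝ) * dist (uk k) v - η) := by
          simp only [hη]; ring
        rw [hyeq]
        exact add_lt_add h1 h2
      obtain ⟨wb, hwbK, hwbmin⟩ := lsc_exists_min hKcpt ⟨uk k, hukK⟩ hG_lsc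
      have hwbd : dist (uk k) wb ≤ R := by
        have := hwbK.2
        rwa [Metric.mem_closedBall, dist_comm] at this
      refine ⟨wb, hwbd, ?_⟩
      intro v hv
      by_cases hvK : v ∈ K
      · exact hwbmin v hvK
      · have hvb : dist (uk k) v ≤ R := by rwa [Metric.mem_closedBall, dist_comm] at hv
        have hvnot : ¬ (E (tk k) v + dist x₀ v ≤ C₁) := by
          intro hcontra
          exact hvK ⟨⟨htk k, hcontra⟩, hv⟩
        push_neg at hvnot
        have hdxv : dist x₀ v ≤ dist x₀ (uk k) + R :=
          le_trans (dist_triangle x₀ (uk k) v) (by linarith)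
        have hEvC : C < E (tk k) v := by
          simp only [hC₁def] at hvnot
          linarith
        have h8 := hwbmin (uk k) hukK
        rw [dist_self, mul_zero, add_zero] at h8
        have h9 : (0:ℝ) ≤ (a:ℝ) * dist (uk k) v :=
          mul_nonneg a.coe_nonneg dist_nonneg
        have := hC k
        linarith
    choose wb hwbd hwbmin using hmin
    by_contra hcon
    rw [Filter.not_eventually] at hcon
    have hfreq : ∃ᶠ k in atTop, slopeE E (tk k) (wb k) ≤ (a : ℝ≥0∞) := by
      apply hcon.mono
      intro k hk
      rcases lt_or_eq_of_le (hwbd k) with hlt | heq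
      · -- interior minimizer: slope ≤ a
        have hτk := hτpos k
        have hposR : 0 < r * τ k - dist (uk k) (wb k) := by linarith
        have hev : ∀ᶠ v in 𝓝[≠] (wb k),
            ENNReal.ofReal ((E (tk k) (wb k) - E (tk k) v) / dist (wb k) v)
              ≤ (a : ℝ≥0∞) := by
          have hball : ∀ᶠ v in 𝓝 (wb k),
              v ∈ Metric.ball (wb k) (r * τ k - dist (uk k) (wb k)) :=
            Metric.isOpen_ball.eventually_mem (Metric.mem_ball_self hposR)
          filter_upwards [Filter.Eventually.filter_mono nhdsWithin_le_nhds hball,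
            self_mem_nhdsWithin] with v hvball hvne
          have hvne' : v ≠ wb k := hvne
          have hdpos : 0 < dist (wb k) v := dist_pos.2 fun h => hvne' h.symm
          have hdlt : dist v (wb k) < r * τ k - dist (uk k) (wb k) := Metric.mem_ball.1 hvball
          have hvclosed : v ∈ Metric.closedBall (uk k) (r * τ k) := by
            rw [Metric.mem_closedBall]
            have h1 := dist_triangle v (wb k) (uk k)
            rw [dist_comm (wb k) (uk k)] at h1
            linarith
          have h8 := hwbmin k v hvclosed
          have h10 := mul_le_mul_of_nonneg_left (dist_triangle (uk k) (wb k) v) a.coe_nonneg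
          rw [mul_add] at h10
          have h9 : E (tk k) (wb k) - E (tk k) v ≤ (a:ℝ) * dist (wb k) v := by linarith
          have h11 : (E (tk k) (wb k) - E (tk k) v) / dist (wb k) v ≤ (a:ℝ) := by
            rw [div_le_iff₀ hdpos]
            exact h9
          calc ENNReal.ofReal ((E (tk k) (wb k) - E (tk k) v) / dist (wb k) v)
              ≤ ENNReal.ofReal (a:ℝ) := ENNReal.ofReal_le_ofReal h11
            _ = (a : ℝ≥0∞) := ENNReal.ofReal_coe_nnreal
        exact Filter.limsup_le_of_le (h := hev)
      · exfalso
        apply hk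
        have hτk := hτpos k
        have hmy := hMY k (wb k)
        rw [heq] at hmy
        have hrr : r * τ k / τ k = r := by
          rw [mul_div_assoc, div_self (ne_of_gt hτk), mul_one]
        rw [hrr] at hmy
        have h8 := hwbmin k (uk k) (Metric.mem_closedBall_self (mul_pos hrpos (hτpos k)).le)
        rw [dist_self, mul_zero, add_zero, heq] at h8
        rw [le_div_iff₀ hτk]
        nlinarith
    obtain ⟨φ, hφmono, hφ⟩ := Filter.extraction_of_frequently_atTop hfreq
    -- the subsequence contradicts (E3')
    have htkφ : Tendsto (fun n => tk (φ n)) atTop (𝓝 t) := htkt.comp hφmono.tendsto_atTop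
    have hwconv : Tendsto (fun n => wb (φ n)) atTop (𝓝 u) := by
      rw [tendsto_iff_dist_tendsto_zero]
      have hb : ∀ n, dist (wb (φ n)) u ≤ r * τ (φ n) + dist (uk (φ n)) u := by
        intro n
        have h1 := dist_triangle (wb (φ n)) (uk (φ n)) u
        have h2 := hwbd (φ n)
        rw [dist_comm (uk (φ n)) (wb (φ n))] at h2
        linarith
      have hz : Tendsto (fun n => r * τ (φ n) + dist (uk (φ n)) u) atTop (𝓝 0) := by
        have h1 : Tendsto (fun n => r * τ (φ n)) atTop (𝓝 0) := by
          have := (hτ.comp hφmono.tendsto_atTop).const_mul r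
          simpa using this
        have h2 : Tendsto (fun n => dist (uk (φ n)) u) atTop (𝓝 0) :=
          tendsto_iff_dist_tendsto_zero.1 (huk.comp hφmono.tendsto_atTop)
        simpa using h1.add h2
      exact squeeze_zero (fun n => dist_nonneg) hb hz
    have hEwb : ∀ k, E (tk k) (wb k) ≤ C := by
      intro k
      have h8 := hwbmin k (uk k) (Metric.mem_closedBall_self (mul_pos hrpos (hτpos k)).le)
      rw [dist_self, mul_zero, add_zero] at h8
      have h9 : (0:ℝ) ≤ (a:ℝ) * dist (uk k) (wb k) :=
        mul_nonneg a.coe_nonneg dist_nonneg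
      linarith [hC k]
    have hdistwb : ∀ k, dist x₀ (wb k) ≤ dist x₀ u + D₀ + r * τ 0 := by
      intro k
      have h1 := dist_triangle x₀ (uk k) (wb k)
      have h2 := dist_triangle x₀ u (uk k)
      have h3 := hwbd k
      have h4 : τ k ≤ τ 0 := hτanti (Nat.zero_le k)
      have h5 : r * τ k ≤ r * τ 0 := mul_le_mul_of_nonneg_left h4 hrpos.le
      have h6 : dist u (uk k) ≤ D₀ := by rw [dist_comm]; exact hD₀ k
      linarith
    have hEb : ∃ C' : ℝ, ∀ n, E 0 (wb (φ n)) + dist x₀ (wb (φ n)) ≤ C' := by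
      set cstar := dist x₀ u + D₀ + r * τ 0 with hcstar
      refine ⟨(C + cstar) * Real.exp (CP * T), fun n => ?_⟩
      have hb := energy_time_bound hE1 hE2 (w := wb (φ n)) (htk (φ n))
      have h0 : 0 ≤ E (tk (φ n)) (wb (φ n)) + dist x₀ (wb (φ n)) :=
        hFnonneg _ (htk _) _
      have h1 : E (tk (φ n)) (wb (φ n)) + dist x₀ (wb (φ n)) ≤ C + cstar :=
        add_le_add (hEwb _) (hdistwb _)
      have h2 : Real.exp (CP * tk (φ n)) ≤ Real.exp (CP * T) :=
        Real.exp_le_exp.2 (mul_le_mul_of_nonneg_left (htk (φ n)).2 hE2.1.le)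
      calc E 0 (wb (φ n)) + dist x₀ (wb (φ n))
          ≤ (E (tk (φ n)) (wb (φ n)) + dist x₀ (wb (φ n))) * Real.exp (CP * tk (φ n)) := hb
        _ ≤ (C + cstar) * Real.exp (CP * T) :=
            mul_le_mul h1 h2 (Real.exp_pos _).le (le_trans h0 h1)
    have h3' := hE3' (fun n => tk (φ n)) (fun n => wb (φ n)) t u
      (fun n => htk (φ n)) ht htkφ hwconv hEb
      ⟨(a : ℝ≥0∞), ENNReal.coe_ne_top, fun n => hφ n⟩
    have hliminf_le : Filter.liminf (fun n => slopeE E (tk (φ n)) (wb (φ n))) atTop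
        ≤ (a : ℝ≥0∞) :=
      Filter.liminf_le_of_frequently_le' ((Filter.Eventually.of_forall hφ).frequently)
    exact absurd ha (not_lt.2 (h3'.1.trans hliminf_le))
  -- assemble
  have hlim : ∀ a : NNReal, (a : ℝ≥0∞) < slopeE E t u →
      ENNReal.ofReal ((a:ℝ) * r - ψ r) ≤ Filter.liminf
        (fun k => ENNReal.ofReal
          ((E (tk k) (uk k) - MYosida E ψ (τ k) (tk k) (uk k)) / τ k)) atTop := by
    intro a ha
    exact Filter.le_liminf_of_le (h := (key a ha).mono fun k hk => ENNReal.ofReal_le_ofReal hk)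
  rw [tsub_le_iff_right]
  have hq0 : ENNReal.ofReal r ≠ 0 := by
    simp only [ne_eq, ENNReal.ofReal_eq_zero, not_le]
    exact hrpos
  have hqt : ENNReal.ofReal r ≠ ⊤ := ENNReal.ofReal_ne_top
  rw [← ENNReal.le_div_iff_mul_le (Or.inl hq0) (Or.inl hqt)]
  apply ENNReal.le_of_forall_nnreal_lt
  intro a ha
  rw [ENNReal.le_div_iff_mul_le (Or.inl hq0) (Or.inl hqt)]
  calc (a : ℝ≥0∞) * ENNReal.ofReal r = ENNReal.ofReal ((a:ℝ) * r) := by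
        rw [← ENNReal.ofReal_coe_nnreal, ← ENNReal.ofReal_mul a.coe_nonneg]
    _ ≤ ENNReal.ofReal ((a:ℝ) * r - ψ r) + ENNReal.ofReal (ψ r) := by
        have heq : ENNReal.ofReal ((a:ℝ) * r) = ENNReal.ofReal (((a:ℝ) * r - ψ r) + ψ r) := by
          congr 1
          ring
        rw [heq]
        exact ENNReal.ofReal_add_le
    _ ≤ _ := add_le_add_left (hlim a ha) _


end
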